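/- Let α = (α_1,…,α_m) be a positional scoring vector, let P = (≻_1,…,≻_n) be an n-voter profile over a finite set A of m alternatives, let δ_1,…,δ_n ≥ 0 be integers, let c ∈ A, and for a ∈ A \ {c} let W_a := max over feasible profiles Q of (S_α(Q,a) − S_α(Q,c)). Then there exists a single manipulator preference ≻_M over A such that c has maximum α-score in the (n+1)-voter profile (Q, ≻_M) for every feasible profile Q, if and only if for every t ∈ {2,…,m} the number of alternatives a ∈ A \ {c} with W_a > α_1 − α_t is at most m − t. -/

import Mathlib

open Finset

abbrev Pref (A : Type*) [Fintype A] := A ≃ Fin (Fintype.card A)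

def prefers {A : Type*} [Fintype A] (p : Pref A) (x y : A) : Prop := p x < p y

instance {A : Type*} [Fintype A] (p : Pref A) (x y : A) : Decidable (prefers p x y) := by
  unfold prefers; infer_instance

def rank {A : Type*} [Fintype A] (p : Pref A) (a : A) : ℕ := (p a : ℕ) + 1

def dKT {A : Type*} [Fintype A] (p q : Pref A) : ℕ :=
  (univ.filter (fun z : A × A => prefers p z.1 z.2 ∧ prefers q z.2 z.1)).card

def margin {A : Type*} [Fintype A] {n : ℕ} (P : Fin n → Pref A) (x y : A) : ℤ :=
  ((univ.filter (fun i => prefers (P i) x y)).card : ℤ) -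
  ((univ.filter (fun i => prefers (P i) y x)).card : ℤ)

def Sk {A : Type*} [Fintype A] {n : ℕ} (k : ℕ) (P : Fin n → Pref A) (a : A) : ℕ :=
  (univ.filter (fun i => ((P i) a : ℕ) < k)).card

noncomputable def buckLevel {A : Type*} [Fintype A] {n : ℕ} (P : Fin n → Pref A) : ℕ :=
  sInf {k : ℕ | ∃ a : A, n < 2 * Sk k P a}

def movePerm : {m : ℕ} → Fin m → Fin m → Equiv.Perm (Fin m)
  | 0, i, _ => i.elim0
  | _ + 1, i, j => (finSuccEquiv' i).trans (finSuccEquiv' j).symm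

def RS {A : Type*} [Fintype A] (p : Pref A) (a : A) (k : ℕ) : Pref A :=
  p.trans (movePerm (p a) ⟨min ((p a : ℕ) + k) (Fintype.card A - 1),
    lt_of_le_of_lt (min_le_right _ _) (Nat.sub_lt (Fin.pos (p a)) one_pos)⟩)

def LS {A : Type*} [Fintype A] (p : Pref A) (a : A) (k : ℕ) : Pref A :=
  p.trans (movePerm (p a) ⟨(p a : ℕ) - k,
    lt_of_le_of_lt (Nat.sub_le _ _) (p a).isLt⟩)

def feasSet {A : Type*} [Fintype A] [DecidableEq A] (p : Pref A) (δ : ℕ) : Finset (Pref A) :=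
  univ.filter (fun q => dKT p q ≤ δ)

lemma dKT_self {A : Type*} [Fintype A] (p : Pref A) : dKT p p = 0 := by
  rw [dKT, Finset.card_eq_zero, Finset.filter_eq_empty_iff]
  rintro z -
  rintro ⟨h1, h2⟩
  exact absurd ((show p z.1 < p z.2 from h1).trans h2) (lt_irrefl _)

lemma feasSet_nonempty {A : Type*} [Fintype A] [DecidableEq A] (p : Pref A) (δ : ℕ) :
    (feasSet p δ).Nonempty :=
  ⟨p, by simp [feasSet, dKT_self]⟩


def manipKey {A : Type*} [Fintype A] [DecidableEq A] (W : A → ℤ) (c : A)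
    (e : A ≃ Fin (Fintype.card A)) (a : A) : ℕ ×ₗ (ℤ ×ₗ Fin (Fintype.card A)) :=
  toLex (if a = c then 0 else 1, toLex (W a, e a))

lemma manipKey_injective {A : Type*} [Fintype A] [DecidableEq A] (W : A → ℤ) (c : A)
    (e : A ≃ Fin (Fintype.card A)) : Function.Injective (manipKey W c e) := by
  intro a b h
  have : e a = e b := congrArg (fun x => (ofLex (ofLex x).2).2) h
  exact e.injective this

lemma manipKey_W_le {A : Type*} [Fintype A] [DecidableEq A] {W : A → ℤ} {c : A}
    {e : A ≃ Fin (Fintype.card A)} {a b : A} (ha : a ≠ c) (hb : b ≠ c)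
    (h : manipKey W c e a ≤ manipKey W c e b) : W a ≤ W b := by
  unfold manipKey at h
  rw [if_neg ha, if_neg hb] at h
  rcases Prod.Lex.le_iff.mp h with h1 | ⟨-, h2⟩
  · exact absurd h1 (lt_irrefl _)
  · rcases Prod.Lex.le_iff.mp h2 with h3 | ⟨h3, -⟩
    · exact h3.le
    · exact h3.le

lemma manipKey_bot {A : Type*} [Fintype A] [DecidableEq A] (W : A → ℤ) (c : A)
    (e : A ≃ Fin (Fintype.card A)) (a : A) : manipKey W c e c ≤ manipKey W c e a := by
  by_cases hac : a = c
  · subst hac; exact le_refl _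
  · unfold manipKey
    rw [if_pos rfl, if_neg hac]
    exact Prod.Lex.le_iff.mpr (Or.inl one_pos)

set_option maxHeartbeats 1000000

theorem scoring_stable_manipulation_exists {A : Type*} [Fintype A] [DecidableEq A] {n : ℕ}
    (α : Fin (Fintype.card A) → ℕ) (hα : Antitone α)
    (P : Fin n → Pref A) (δ : Fin n → ℕ) (c : A)
    (W : A → ℤ)
    (hW : ∀ a : A, a ≠ c → IsGreatest {z : ℤ | ∃ Q : Fin n → Pref A,
        (∀ i, dKT (P i) (Q i) ≤ δ i) ∧
        z = (∑ i, (α ((Q i) a) : ℤ)) - ∑ i, (α ((Q i) c) : ℤ)} (W a)) :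
    (∃ M : Pref A, ∀ Q : Fin n → Pref A, (∀ i, dKT (P i) (Q i) ≤ δ i) →
      ∀ b : A, (∑ i, (α ((Q i) b) : ℤ)) + (α (M b) : ℤ) ≤
               (∑ i, (α ((Q i) c) : ℤ)) + (α (M c) : ℤ)) ↔
    (∀ t : ℕ, ∀ ht2 : 2 ≤ t, ∀ htm : t ≤ Fintype.card A,
      (univ.filter (fun a : A => a ≠ c ∧
        (α ⟨0, Fintype.card_pos_iff.mpr ⟨c⟩⟩ : ℤ) - (α ⟨t - 1, by omega⟩ : ℤ) < W a)).card ≤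
      Fintype.card A - t) := by
  have hm0 : 0 < Fintype.card A := Fintype.card_pos_iff.mpr ⟨c⟩
  constructor
  · rintro ⟨M, hM⟩ t ht2 htm
    have hkey : ∀ a : A, a ≠ c →
        (α ⟨0, hm0⟩ : ℤ) - (α ⟨t - 1, by omega⟩ : ℤ) < W a → t ≤ (M a : ℕ) := by
      intro a ha hWa
      obtain ⟨⟨Q, hQf, hQeq⟩, -⟩ := hW a ha
      have h1 := hM Q hQf a
      have hMc : (α (M c) : ℤ) ≤ (α ⟨0, hm0⟩ : ℤ) := by
        exact_mod_cast hα (show (⟨0, hm0⟩ : Fin (Fintype.card A)) ≤ M c from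
          Fin.le_def.mpr (Nat.zero_le _))
      by_contra hlt
      push_neg at hlt
      have hle : M a ≤ (⟨t - 1, by omega⟩ : Fin (Fintype.card A)) := by
        rw [Fin.le_def]
        show (M a : ℕ) ≤ t - 1
        omega
      have h2 : (α (⟨t - 1, by omega⟩ : Fin (Fintype.card A)) : ℤ) ≤ (α (M a) : ℤ) :=
        Nat.cast_le.mpr (hα hle)
      have : W a ≤ (α ⟨0, hm0⟩ : ℤ) - (α ⟨t - 1, by omega⟩ : ℤ) := by
        linarith only [h1, hMc, h2, hQeq]
      exact absurd this (not_le.mpr hWa)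
    have hsub : (univ.filter (fun a : A => a ≠ c ∧
        (α ⟨0, hm0⟩ : ℤ) - (α ⟨t - 1, by omega⟩ : ℤ) < W a)).card ≤
        (univ.filter (fun i : Fin (Fintype.card A) => t ≤ (i : ℕ))).card := by
      apply Finset.card_le_card_of_injOn M
      · intro a haS
        simp only [Finset.mem_coe, Finset.mem_filter, Finset.mem_univ, true_and] at haS ⊢
        exact hkey a haS.1 haS.2
      · exact M.injective.injOn
    have hlow : t ≤ (univ.filter (fun i : Fin (Fintype.card A) => ¬ t ≤ (i : ℕ))).card := by
      have h := Finset.card_le_card_of_injOn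
        (fun k : Fin t => (⟨(k : ℕ), lt_of_lt_of_le k.isLt htm⟩ : Fin (Fintype.card A)))
        (s := (univ : Finset (Fin t)))
        (t := univ.filter (fun i : Fin (Fintype.card A) => ¬ t ≤ (i : ℕ)))
        (fun k _ => by
          simp only [Finset.mem_coe, Finset.mem_filter, Finset.mem_univ, true_and, not_le]
          exact k.isLt)
        (fun x _ y _ h => by
          apply Fin.ext
          have := congrArg Fin.val h
          simpa using this)
      simpa using h
    have htot := Finset.card_filter_add_card_filter_not
      (s := (univ : Finset (Fin (Fintype.card A)))) (p := fun i => t ≤ (i : ℕ))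
    rw [Finset.card_univ, Fintype.card_fin] at htot
    omega
  · intro hcond
    set e := Fintype.equivFin A with he
    set f : Fin (Fintype.card A) → (ℕ ×ₗ (ℤ ×ₗ Fin (Fintype.card A))) :=
      fun i => manipKey W c e (e.symm i) with hf
    set σ := Tuple.sort f with hσ
    set M : A ≃ Fin (Fintype.card A) := e.trans σ.symm with hMdef
    have hkey_mono : ∀ i j : Fin (Fintype.card A), i ≤ j →
        manipKey W c e (M.symm i) ≤ manipKey W c e (M.symm j) := by
      intro i j hij
      exact Tuple.monotone_sort f hij
    have hMle : ∀ a b : A, M a ≤ M b → manipKey W c e a ≤ manipKey W c e b := by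
      intro a b h
      have h2 := hkey_mono (M a) (M b) h
      rwa [Equiv.symm_apply_apply, Equiv.symm_apply_apply] at h2
    have hMc : M c = ⟨0, hm0⟩ := by
      have h1 : manipKey W c e (M.symm ⟨0, hm0⟩) ≤ manipKey W c e c := by
        have := hkey_mono ⟨0, hm0⟩ (M c) (Fin.le_def.mpr (Nat.zero_le _))
        rwa [Equiv.symm_apply_apply] at this
      have h2 := manipKey_bot W c e (M.symm ⟨0, hm0⟩)
      have h3 : M.symm ⟨0, hm0⟩ = c := manipKey_injective W c e (le_antisymm h1 h2)
      rw [← h3]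
      exact M.apply_symm_apply _
    have hbound : ∀ a : A, a ≠ c → W a ≤ (α ⟨0, hm0⟩ : ℤ) - (α (M a) : ℤ) := by
      intro a ha
      by_contra hcon
      push_neg at hcon
      have hjm : (M a : ℕ) < Fintype.card A := (M a).isLt
      have hj1 : 1 ≤ (M a : ℕ) := by
        by_contra h0
        push_neg at h0
        apply ha
        apply M.injective
        rw [hMc]
        apply Fin.ext
        simp only [Fin.val_mk]
        omega
      have hcard := hcond ((M a : ℕ) + 1) (by omega) (by omega)
      have hlow : Fintype.card A - (M a : ℕ) ≤ (univ.filter (fun b : A => b ≠ c ∧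
          (α ⟨0, hm0⟩ : ℤ) - (α ⟨(M a : ℕ) + 1 - 1, by omega⟩ : ℤ) < W b)).card := by
        have h := Finset.card_le_card_of_injOn
          (fun k : Fin (Fintype.card A - (M a : ℕ)) =>
            M.symm ⟨(M a : ℕ) + (k : ℕ), by omega⟩)
          (s := (univ : Finset (Fin (Fintype.card A - (M a : ℕ)))))
          (t := univ.filter (fun b : A => b ≠ c ∧
            (α ⟨0, hm0⟩ : ℤ) - (α ⟨(M a : ℕ) + 1 - 1, by omega⟩ : ℤ) < W b))
          (fun k _ => by
            simp only [Finset.mem_coe, Finset.mem_filter, Finset.mem_univ, true_and]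
            have hMb : M (M.symm ⟨(M a : ℕ) + (k : ℕ), by omega⟩) =
                ⟨(M a : ℕ) + (k : ℕ), by omega⟩ := M.apply_symm_apply _
            have hbc : M.symm ⟨(M a : ℕ) + (k : ℕ), by omega⟩ ≠ c := by
              intro hbceq
              rw [hbceq, hMc] at hMb
              have := congrArg Fin.val hMb
              simp only [Fin.val_mk] at this
              omega
            refine ⟨hbc, ?_⟩
            have hWab : W a ≤ W (M.symm ⟨(M a : ℕ) + (k : ℕ), by omega⟩) := by
              apply manipKey_W_le ha hbc
              apply hMle
              rw [hMb, Fin.le_def]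
              exact Nat.le_add_right _ _
            have heq : (⟨(M a : ℕ) + 1 - 1, by omega⟩ : Fin (Fintype.card A)) = M a := by
              apply Fin.ext; simp
            rw [heq]
            exact lt_of_lt_of_le hcon hWab)
          (fun x _ y _ hxy => by
            have h1 := M.symm.injective hxy
            have h2 := congrArg Fin.val h1
            simp only [Fin.val_mk] at h2
            exact Fin.ext (by omega))
        simpa using h
      omega
    refine ⟨M, ?_⟩
    intro Q hQ b
    by_cases hbc : b = c
    · subst hbc; exact le_refl _
    · have h1 : (∑ i, (α ((Q i) b) : ℤ)) - ∑ i, (α ((Q i) c) : ℤ) ≤ W b :=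
        (hW b hbc).2 ⟨Q, hQ, rfl⟩
      have h2 := hbound b hbc
      have h3 : (α (M c) : ℤ) = (α ⟨0, hm0⟩ : ℤ) := by rw [hMc]
      linarith only [h1, h2, h3]
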